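/- Let F_a, F_b : [0,1] → [0,1] be CDFs with F_b(l) > F_a(l) for all l ∈ (0,1) (group b disadvantaged in features), and let c_L : [0,1] × [0,1] → ℝ≥0 be a differentiable likelihood cost with ∂c_L(l,τ)/∂l < 0 for l ∈ (0,τ) and c_L(τ,τ) = 0. Define the group social burden B_g(τ) = ∫₀^τ c_L(l,τ) dF_g(l). Then via integration by parts, B_g(τ) = −∫₀^τ (∂c_L(l,τ)/∂l) F_g(l) dl, and the social gap Gap(τ) = B_b(τ) − B_a(τ) = ∫₀^τ (∂c_L(l,τ)/∂l)(F_a(l) − F_b(l)) dl is strictly positive for τ ∈ (0,1]. -/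

import Mathlib

open MeasureTheory

private lemma stmt7_aux (F : StieltjesFunction ℝ) (cL dcL : ℝ → ℝ → ℝ) (τ : ℝ)
    (hτ : 0 < τ) (hF0 : F 0 = 0) (hFnn : ∀ l : ℝ, 0 ≤ F l)
    (hderiv : ∀ l : ℝ, HasDerivAt (fun s => cL s τ) (dcL l τ) l)
    (hneg : ∀ l : ℝ, 0 < l → l < τ → dcL l τ < 0)
    (hzero : cL τ τ = 0)
    (hint : IntervalIntegrable (fun l => dcL l τ * F l) volume 0 τ) :
    ∫ l in Set.Ioc (0:ℝ) τ, cL l τ ∂F.measure = -∫ l in (0:ℝ)..τ, dcL l τ * F l := by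
  have hFmono := F.mono
  have hF0' : ∀ l : ℝ, l ≤ 0 → F l = 0 := fun l hl =>
    le_antisymm (hF0 ▸ hFmono hl) (hFnn l)
  have hcont : Continuous fun s => cL s τ :=
    continuous_iff_continuousAt.2 fun s => (hderiv s).continuousAt
  have hdm : Measurable fun s => dcL s τ := by
    have h : (fun s => dcL s τ) = deriv (fun s => cL s τ) :=
      funext fun s => ((hderiv s).deriv).symm
    rw [h]; exact measurable_deriv _
  -- the set where F vanishes in (0, τ] is F.measure-null
  have hN : F.measure {l : ℝ | 0 < l ∧ l ≤ τ ∧ F l = 0} = 0 := by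
    set S : Set ℝ := {l : ℝ | 0 < l ∧ l ≤ τ ∧ F l = 0} with hS
    rcases S.eq_empty_or_nonempty with hemp | hne
    · simp [hemp]
    · have hbdd : BddAbove S := ⟨τ, fun l hl => hl.2.1⟩
      set m := sSup S with hm
      have hmτ : m ≤ τ := csSup_le hne fun l hl => hl.2.1
      obtain ⟨s0, hs0⟩ := id hne
      have hm0 : 0 < m := lt_of_lt_of_le hs0.1 (le_csSup hbdd hs0)
      have hlt : ∀ l : ℝ, l < m → F l = 0 := by
        intro l hl
        rcases le_or_gt l 0 with h0 | h0
        · exact hF0' l h0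
        · obtain ⟨s, hsS, hls⟩ := exists_lt_of_lt_csSup hne hl
          exact le_antisymm (hsS.2.2 ▸ hFmono hls.le) (hFnn l)
      have hleft : Function.leftLim F m = 0 := by
        apply leftLim_eq_of_tendsto
        have : (fun l => F l) =ᶠ[nhdsWithin m (Set.Iio m)] fun _ => (0:ℝ) := by
          filter_upwards [self_mem_nhdsWithin] with l hl using hlt l hl
        exact Filter.Tendsto.congr' this.symm tendsto_const_nhds
      rcases eq_or_ne (F m) 0 with hFm | hFm
      · refine measure_mono_null (t := Set.Ioc 0 m)
          (fun l hl => Set.mem_Ioc.2 ⟨hl.1, le_csSup hbdd hl⟩) ?_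
        rw [F.measure_Ioc]; simp [hF0, hFm]
      · refine measure_mono_null (t := Set.Ioo 0 m)
          (fun l hl => Set.mem_Ioo.2 ⟨hl.1, lt_of_le_of_ne (le_csSup hbdd hl)
            fun hlm => hFm (hlm ▸ hl.2.2)⟩) ?_
        rw [F.measure_Ioo]; simp [hF0, hleft]
  -- cL is nonnegative on [0, τ]
  have hanti : AntitoneOn (fun s => cL s τ) (Set.Icc 0 τ) := by
    refine antitoneOn_of_deriv_nonpos (convex_Icc 0 τ) hcont.continuousOn
      (fun x _ => (hderiv x).differentiableAt.differentiableWithinAt) ?_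
    intro x hx
    rw [interior_Icc] at hx
    rw [(hderiv x).deriv]
    exact (hneg x hx.1 hx.2).le
  have hclnn : ∀ l ∈ Set.Icc (0:ℝ) τ, 0 ≤ cL l τ := by
    intro l hl
    have h2 : cL τ τ ≤ cL l τ := hanti hl (Set.right_mem_Icc.2 hτ.le) hl.2
    rwa [hzero] at h2
  -- representation of cL via the FTC for l with F l ≠ 0
  have hrep : ∀ l : ℝ, 0 < l → l ≤ τ → F l ≠ 0 →
      IntervalIntegrable (fun s => dcL s τ) volume l τ ∧
      cL l τ = ∫ s in l..τ, -dcL s τ := by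
    intro l hl0 hlτ hFl
    have hFlpos : 0 < F l := lt_of_le_of_ne (hFnn l) (Ne.symm hFl)
    have h1 : IntervalIntegrable (fun s => dcL s τ * F s) volume l τ :=
      hint.mono_set (Set.uIcc_subset_uIcc
        (by rw [Set.uIcc_of_le hτ.le]; exact Set.mem_Icc.2 ⟨hl0.le, hlτ⟩)
        (by rw [Set.uIcc_of_le hτ.le]; exact Set.mem_Icc.2 ⟨hτ.le, le_rfl⟩))
    have hii : IntervalIntegrable (fun s => dcL s τ) volume l τ := by
      refine IntervalIntegrable.mono_fun ((h1.abs).const_mul (F l)⁻¹)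
        (hdm.aestronglyMeasurable.restrict) ?_
      rw [Set.uIoc_of_le hlτ]
      filter_upwards [ae_restrict_mem measurableSet_Ioc] with s hs
      have hFs : F l ≤ F s := hFmono hs.1.le
      have h2 : |dcL s τ| * F l ≤ |dcL s τ| * F s :=
        mul_le_mul_of_nonneg_left hFs (abs_nonneg _)
      have key : |dcL s τ| ≤ (F l)⁻¹ * |dcL s τ * F s| := by
        rw [abs_mul, abs_of_nonneg (hFnn s)]
        calc |dcL s τ| = (F l)⁻¹ * (|dcL s τ| * F l) := by field_simp
          _ ≤ (F l)⁻¹ * (|dcL s τ| * F s) :=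
              mul_le_mul_of_nonneg_left h2 (inv_nonneg.2 (hFnn l))
      calc ‖dcL s τ‖ = |dcL s τ| := rfl
        _ ≤ (F l)⁻¹ * |dcL s τ * F s| := key
        _ ≤ ‖(F l)⁻¹ * |dcL s τ * F s|‖ := le_abs_self _
    refine ⟨hii, ?_⟩
    have hftc : ∫ s in l..τ, dcL s τ = cL τ τ - cL l τ :=
      intervalIntegral.integral_eq_sub_of_hasDerivAt (fun s _ => hderiv s) hii
    rw [intervalIntegral.integral_neg, hftc, hzero]
    ring
  set g : ℝ → ENNReal := fun s => ENNReal.ofReal (-dcL s τ) with hg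
  set μ := F.measure.restrict (Set.Ioc 0 τ) with hμ
  -- a.e. facts on μ
  have hmem : ∀ᵐ l ∂μ, l ∈ Set.Ioc (0:ℝ) τ := ae_restrict_mem measurableSet_Ioc
  have hFne : ∀ᵐ l ∂μ, ¬(0 < l ∧ l ≤ τ ∧ F l = 0) := by
    apply ae_restrict_of_ae
    rw [ae_iff]
    simpa using hN
  -- step 1 : pass to lintegral
  have step1 : ∫ l in Set.Ioc (0:ℝ) τ, cL l τ ∂F.measure
      = (∫⁻ l, ENNReal.ofReal (cL l τ) ∂μ).toReal := by
    rw [integral_eq_lintegral_of_nonneg_ae]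
    · filter_upwards [hmem] with l hl using hclnn l ⟨hl.1.le, hl.2⟩
    · exact hcont.aestronglyMeasurable.restrict
  -- step 2 : rewrite cL as an inner lintegral
  have step2 : ∫⁻ l, ENNReal.ofReal (cL l τ) ∂μ
      = ∫⁻ l, ∫⁻ s, (Set.Ioc l τ).indicator g s ∂volume ∂μ := by
    apply lintegral_congr_ae
    filter_upwards [hmem, hFne] with l hl hne
    have hFl : F l ≠ 0 := fun h => hne ⟨hl.1, hl.2, h⟩
    obtain ⟨hii, hrepl⟩ := hrep l hl.1 hl.2 hFl
    have hnn : 0 ≤ᵐ[volume.restrict (Set.Ioc l τ)] fun s => -dcL s τ := by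
      have hτe : ∀ᵐ s ∂volume.restrict (Set.Ioc l τ), s ≠ τ :=
        ae_restrict_of_ae (by rw [ae_iff]; simpa using measure_singleton τ)
      filter_upwards [ae_restrict_mem measurableSet_Ioc, hτe] with s hs hsτ
      have h3 := hneg s (hl.1.trans hs.1) (lt_of_le_of_ne hs.2 hsτ)
      show (0:ℝ) ≤ -dcL s τ
      linarith
    have hintl : IntegrableOn (fun s => -dcL s τ) (Set.Ioc l τ) volume := by
      have h4 := (hii.neg).1
      simpa [Pi.neg_def] using h4
    rw [hrepl, intervalIntegral.integral_of_le hl.2,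
      ofReal_integral_eq_lintegral_ofReal hintl hnn, lintegral_indicator measurableSet_Ioc _]
  -- step 3 : Tonelli
  have step3 : ∫⁻ l, ∫⁻ s, (Set.Ioc l τ).indicator g s ∂volume ∂μ
      = ∫⁻ s, ∫⁻ l, (Set.Ioc l τ).indicator g s ∂μ ∂volume := by
    apply lintegral_lintegral_swap
    have heq : (Function.uncurry fun l s => (Set.Ioc l τ).indicator g s)
        = Set.indicator {p : ℝ × ℝ | p.1 < p.2 ∧ p.2 ≤ τ} (fun p => g p.2) := by
      funext p
      simp [Function.uncurry, Set.indicator_apply, Set.mem_Ioc]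
    rw [heq]
    exact (Measurable.indicator ((ENNReal.measurable_ofReal.comp hdm.neg).comp measurable_snd)
      ((measurableSet_lt measurable_fst measurable_snd).inter
        (measurable_snd measurableSet_Iic))).aemeasurable
  -- step 4 : compute the inner integral
  have step4 : ∀ s : ℝ, ∫⁻ l, (Set.Ioc l τ).indicator g s ∂μ
      = (Set.Iic τ).indicator (fun s => g s * F.measure (Set.Ioo 0 s)) s := by
    intro s
    rcases le_or_gt s τ with hs | hs
    · have heq : (fun l => (Set.Ioc l τ).indicator g s)
          = (Set.Iio s).indicator (fun _ => g s) := by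
        funext l
        by_cases h : l < s <;> simp [Set.indicator_apply, Set.mem_Ioc, Set.mem_Iio, h, hs]
      rw [heq, lintegral_indicator measurableSet_Iio _, setLIntegral_const,
        Set.indicator_of_mem (Set.mem_Iic.2 hs)]
      congr 1
      rw [hμ, Measure.restrict_apply measurableSet_Iio]
      congr 1
      ext l
      simp only [Set.mem_inter_iff, Set.mem_Iio, Set.mem_Ioc, Set.mem_Ioo]
      exact ⟨fun ⟨h1, h2, _⟩ => ⟨h2, h1⟩, fun ⟨h1, h2⟩ => ⟨h2, ⟨h1, (h2.le.trans hs)⟩⟩⟩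
    · have heq : (fun l => (Set.Ioc l τ).indicator g s) = fun _ => (0:ENNReal) := by
        funext l
        exact Set.indicator_of_notMem (fun h => hs.not_ge h.2) _
      rw [heq, lintegral_const, zero_mul, Set.indicator_of_notMem (Set.notMem_Iic.2 hs)]
  -- step 5 : identify with the Lebesgue integral of -dcL * F
  have step5 : ∫⁻ s, (Set.Iic τ).indicator (fun s => g s * F.measure (Set.Ioo 0 s)) s ∂volume
      = ∫⁻ s in Set.Ioc (0:ℝ) τ, ENNReal.ofReal (-(dcL s τ * F s)) ∂volume := by
    rw [← lintegral_indicator measurableSet_Ioc _]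
    apply lintegral_congr_ae
    have hJ : volume {x : ℝ | ¬ContinuousAt F x} = 0 :=
      Set.Countable.measure_zero (Monotone.countable_not_continuousAt hFmono) _
    have hJc : ∀ᵐ x ∂(volume : Measure ℝ), ContinuousAt F x := by
      rw [ae_iff]; simpa using hJ
    have hτa : ∀ᵐ x ∂(volume : Measure ℝ), x ≠ τ := by
      rw [ae_iff]; simpa using measure_singleton τ
    filter_upwards [hJc, hτa] with s hcs hsτ
    have hll : Function.leftLim F s = F s :=
      leftLim_eq_of_tendsto
        (tendsto_nhdsWithin_of_tendsto_nhds hcs.tendsto)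
    rcases le_or_gt s 0 with h0 | h0
    · rw [Set.indicator_of_mem (Set.mem_Iic.2 (h0.trans hτ.le)),
        Set.indicator_of_notMem (by simp [Set.mem_Ioc]; intro h; linarith)]
      rw [Set.Ioo_eq_empty (by linarith), measure_empty, mul_zero]
    · rcases le_or_gt s τ with h1 | h1
      · have hsτ' : s < τ := lt_of_le_of_ne h1 hsτ
        rw [Set.indicator_of_mem (Set.mem_Iic.2 h1),
          Set.indicator_of_mem (Set.mem_Ioc.2 ⟨h0, h1⟩)]
        rw [F.measure_Ioo, hll, hF0, sub_zero, hg]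
        rw [← ENNReal.ofReal_mul (by linarith [hneg s h0 hsτ'])]
        ring_nf
      · rw [Set.indicator_of_notMem (Set.notMem_Iic.2 h1),
          Set.indicator_of_notMem (by simp [Set.mem_Ioc]; intro h; linarith)]
  -- step 6 : back to a Bochner integral
  have hnl : ∀ᵐ s ∂volume.restrict (Set.Ioc (0:ℝ) τ), 0 ≤ -(dcL s τ * F s) := by
    have hτe : ∀ᵐ s ∂volume.restrict (Set.Ioc (0:ℝ) τ), s ≠ τ :=
      ae_restrict_of_ae (by rw [ae_iff]; simpa using measure_singleton τ)
    filter_upwards [ae_restrict_mem measurableSet_Ioc, hτe] with s hs hsτ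
    have h := hneg s hs.1 (lt_of_le_of_ne hs.2 hsτ)
    nlinarith [hFnn s]
  have hint6 : IntegrableOn (fun s => -(dcL s τ * F s)) (Set.Ioc (0:ℝ) τ) volume := by
    have := (hint.neg).1
    simpa using this
  have step6 : ∫⁻ s in Set.Ioc (0:ℝ) τ, ENNReal.ofReal (-(dcL s τ * F s)) ∂volume
      = ENNReal.ofReal (∫ s in Set.Ioc (0:ℝ) τ, -(dcL s τ * F s)) :=
    (ofReal_integral_eq_lintegral_ofReal hint6 hnl).symm
  -- combine
  rw [step1, step2, step3]
  rw [lintegral_congr fun s => step4 s]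
  rw [step5, step6, ENNReal.toReal_ofReal (integral_nonneg_of_ae hnl)]
  rw [integral_neg, intervalIntegral.integral_of_le hτ.le]

/-- If group `b` is disadvantaged in features (strict first-order stochastic
dominance `F_b > F_a` on `(0,1)`) and the likelihood cost `c_L` is
differentiable in its first argument with `∂c_L/∂l < 0` on `(0,τ)` and
`c_L(τ,τ) = 0`, then by integration by parts the group social burden satisfies
`B_g(τ) = −∫₀^τ (∂c_L(l,τ)/∂l) F_g(l) dl`, and the social gap
`Gap(τ) = ∫₀^τ (∂c_L(l,τ)/∂l)(F_a(l) − F_b(l)) dl` is strictly positive for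
`τ ∈ (0,1]`. -/
theorem stmt_7 (Fa Fb : StieltjesFunction ℝ) (cL dcL : ℝ → ℝ → ℝ) (τ : ℝ)
    (hτ : τ ∈ Set.Ioc (0:ℝ) 1)
    (hFa0 : Fa 0 = 0) (hFb0 : Fb 0 = 0)
    (hFann : ∀ l : ℝ, 0 ≤ Fa l) (hFbnn : ∀ l : ℝ, 0 ≤ Fb l)
    (hFa1 : ∀ l : ℝ, Fa l ≤ 1) (hFb1 : ∀ l : ℝ, Fb l ≤ 1)
    (hdom : ∀ l ∈ Set.Ioo (0:ℝ) 1, Fa l < Fb l)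
    (hderiv : ∀ t l : ℝ, HasDerivAt (fun s => cL s t) (dcL l t) l)
    (hneg : ∀ t l : ℝ, 0 < l → l < t → dcL l t < 0)
    (hzero : ∀ t : ℝ, cL t t = 0)
    (hinta : IntervalIntegrable (fun l => dcL l τ * Fa l) volume 0 τ)
    (hintb : IntervalIntegrable (fun l => dcL l τ * Fb l) volume 0 τ) :
    (∫ l in Set.Ioc (0:ℝ) τ, cL l τ ∂Fa.measure
        = -∫ l in (0:ℝ)..τ, dcL l τ * Fa l) ∧
    (∫ l in Set.Ioc (0:ℝ) τ, cL l τ ∂Fb.measure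
        = -∫ l in (0:ℝ)..τ, dcL l τ * Fb l) ∧
    0 < ∫ l in (0:ℝ)..τ, dcL l τ * (Fa l - Fb l) := by
  obtain ⟨hτ0, hτ1⟩ := hτ
  refine ⟨stmt7_aux Fa cL dcL τ hτ0 hFa0 hFann (hderiv τ) (hneg τ) (hzero τ) hinta,
    stmt7_aux Fb cL dcL τ hτ0 hFb0 hFbnn (hderiv τ) (hneg τ) (hzero τ) hintb, ?_⟩
  have hii : IntervalIntegrable (fun l => dcL l τ * (Fa l - Fb l)) volume 0 τ := by
    have heq : (fun l => dcL l τ * (Fa l - Fb l))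
        = fun l => dcL l τ * Fa l - dcL l τ * Fb l := by
      funext l; ring
    rw [heq]; exact hinta.sub hintb
  apply intervalIntegral.intervalIntegral_pos_of_pos_on hii ?_ hτ0
  intro x hx
  have h1 : dcL x τ < 0 := hneg τ x hx.1 hx.2
  have h2 : Fa x - Fb x < 0 := sub_neg.2 (hdom x ⟨hx.1, lt_of_lt_of_le hx.2 hτ1⟩)
  exact mul_pos_of_neg_of_neg h1 h2
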